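/- For n ≥ 1, the polar Legendre polynomial P_n satisfies (n+1) L_n(x) = (x - 1) P_n'(x) + P_n(x) for all x. -/

import Mathlib

open intervalIntegral Finset Polynomial

/-- The `n`-th Legendre polynomial (as a function), via the Rodrigues formula,
normalized so that `legendreP n 1 = 1`. -/
noncomputable def legendreP (n : ℕ) : ℝ → ℝ :=
  fun x => (1 / (2 ^ n * (n.factorial : ℝ))) * iteratedDeriv n (fun y => (y ^ 2 - 1) ^ n) x

/-- `Qpoly n x = -∫_x^1 L_{n-1}(t) dt`. -/
noncomputable def Qpoly (n : ℕ) : ℝ → ℝ :=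
  fun x => -∫ t in x..(1 : ℝ), legendreP (n - 1) t

lemma legendreP_continuous (n : ℕ) : Continuous (legendreP n) := by
  unfold legendreP
  apply continuous_const.mul
  have hf : ContDiff ℝ ⊤ (fun y : ℝ => (y ^ 2 - 1) ^ n) := by fun_prop
  exact hf.continuous_iteratedDeriv n (le_top)

theorem stmt8 (n : ℕ) (hn : 1 ≤ n) (P : Polynomial ℝ) (hdeg : P.degree = n)
    (hdef : ∀ x : ℝ, -((n : ℝ) + 1) * ∫ t in x..(1 : ℝ), legendreP n t = (x - 1) * P.eval x)
    (x : ℝ) :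
    ((n : ℝ) + 1) * legendreP n x = (x - 1) * (Polynomial.derivative P).eval x + P.eval x := by
  have hcont := legendreP_continuous n
  have hInt : HasDerivAt (fun u => ∫ t in u..(1:ℝ), legendreP n t) (-(legendreP n x)) x :=
    intervalIntegral.integral_hasDerivAt_left (hcont.intervalIntegrable _ _)
      (hcont.stronglyMeasurableAtFilter _ _) hcont.continuousAt
  have h1 : HasDerivAt (fun u => -((n : ℝ) + 1) * ∫ t in u..(1:ℝ), legendreP n t)
      (((n : ℝ) + 1) * legendreP n x) x := by
    have := hInt.const_mul (-((n : ℝ) + 1))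
    rw [show ((n : ℝ) + 1) * legendreP n x = -((n : ℝ) + 1) * -(legendreP n x) by ring]
    exact this
  have h1' : HasDerivAt (fun u => (u - 1) * P.eval u) (((n : ℝ) + 1) * legendreP n x) x := by
    have heq : (fun u => -((n : ℝ) + 1) * ∫ t in u..(1:ℝ), legendreP n t)
        = fun u => (u - 1) * P.eval u := funext fun u => hdef u
    rwa [heq] at h1
  have h2 : HasDerivAt (fun u => (u - 1) * P.eval u)
      ((x - 1) * (Polynomial.derivative P).eval x + P.eval x) x := by
    have hq := ((X - C (1 : ℝ)) * P).hasDerivAt x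
    have hev : ∀ u : ℝ, ((X - C (1 : ℝ)) * P).eval u = (u - 1) * P.eval u := by
      intro u; simp
    have hd : (Polynomial.derivative ((X - C (1 : ℝ)) * P)).eval x
        = (x - 1) * (Polynomial.derivative P).eval x + P.eval x := by
      simp [Polynomial.derivative_mul]; ring
    rw [hd] at hq
    exact hq.congr_of_eventuallyEq (Filter.Eventually.of_forall fun u => (hev u).symm)
  exact h1'.unique h2
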